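/- arXiv:0809.0748 — 4 statements merged into one kernel-verified Lean document; each statement's English description precedes it below -/
import Mathlib

section
/- In a loop Q, the four Moufang identities ((xy)x)z = x(y(xz)), x(y(zy)) = ((xy)z)y, (xy)(zx) = x((yz)x), and (xy)(zx) = (x(yz))x are pairwise equivalent: if one of them holds for all x, y, z ∈ Q, then all of them hold. -/
/-- A loop: a quasigroup with a two-sided identity. -/
class Loop (Q : Type*) extends Mul Q, One Q where
  one_mul : ∀ x : Q, 1 * x = x
  mul_one : ∀ x : Q, x * 1 = x
  mulLeft_exu : ∀ a b : Q, ∃! x : Q, a * x = b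
  mulRight_exu : ∀ a b : Q, ∃! y : Q, y * a = b

namespace LoopAux

variable {Q : Type*} [Loop Q]

lemma lcancel {a x y : Q} (h : a * x = a * y) : x = y :=
  (Loop.mulLeft_exu a (a * y)).unique h rfl

lemma rcancel {a x y : Q} (h : x * a = y * a) : x = y :=
  (Loop.mulRight_exu a (y * a)).unique h rfl

/-- the left inverse -/
noncomputable def iv (x : Q) : Q := (Loop.mulRight_exu x 1).choose

lemma iv_mul (x : Q) : iv x * x = 1 := (Loop.mulRight_exu x 1).choose_spec.1

section Flex

variable (hflex : ∀ x y : Q, (x * y) * x = x * (y * x))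

include hflex

lemma mul_iv (x : Q) : x * iv x = 1 := by
  have h := hflex x (iv x)
  rw [iv_mul, Loop.mul_one] at h
  have h2 : (x * iv x) * x = 1 * x := by rw [h, Loop.one_mul]
  exact rcancel h2

lemma iv_iv (x : Q) : iv (iv x) = x := by
  have h1 : iv (iv x) * iv x = 1 := iv_mul (iv x)
  have h2 : x * iv x = 1 := mul_iv hflex x
  exact rcancel (h1.trans h2.symm)

end Flex

section IP

/-- anti-automorphic inverse from LIP + RIP -/
lemma aip (hL : ∀ x z : Q, iv x * (x * z) = z) (hR : ∀ x z : Q, (z * x) * iv x = z)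
    (x y : Q) : iv (x * y) = iv y * iv x := by
  have h1 : iv x * (x * y) = y := hL x y
  have h2 : (iv x * (x * y)) * iv (x * y) = iv x := hR (x * y) (iv x)
  rw [h1] at h2
  have h3 : iv y * (y * iv (x * y)) = iv (x * y) := hL y _
  rw [h2] at h3
  exact h3.symm

/-- right-inverse shift of an autotopism -/
lemma rshift (hR : ∀ x z : Q, (z * x) * iv x = z) (α β γ : Q → Q)
    (hA : ∀ u v : Q, α u * β v = γ (u * v)) (s w : Q) :
    γ s * iv (β (iv w)) = α (s * w) := by
  have h1 : α (s * w) * β (iv w) = γ ((s * w) * iv w) := hA _ _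
  rw [hR w s] at h1
  calc γ s * iv (β (iv w)) = (α (s * w) * β (iv w)) * iv (β (iv w)) := by rw [h1]
    _ = α (s * w) := hR _ _

/-- left-inverse shift of an autotopism -/
lemma lshift (hL : ∀ x z : Q, iv x * (x * z) = z) (α β γ : Q → Q)
    (hA : ∀ u v : Q, α u * β v = γ (u * v)) (u s : Q) :
    iv (α (iv u)) * γ s = β (u * s) := by
  have h1 : α (iv u) * β (u * s) = γ (iv u * (u * s)) := hA _ _
  rw [hL u s] at h1
  calc iv (α (iv u)) * γ s = iv (α (iv u)) * (α (iv u) * β (u * s)) := by rw [h1]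
    _ = β (u * s) := hL _ _

end IP

/-- M1 implies M4 -/
lemma m1_imp_m4 (h1 : ∀ x y z : Q, ((x * y) * x) * z = x * (y * (x * z))) :
    ∀ x y z : Q, (x * y) * (z * x) = (x * (y * z)) * x := by
  have hflex : ∀ x y : Q, (x * y) * x = x * (y * x) := by
    intro x y
    have h := h1 x y 1
    simpa [Loop.mul_one] using h
  have hmi : ∀ x : Q, x * iv x = 1 := mul_iv hflex
  have hii : ∀ x : Q, iv (iv x) = x := iv_iv hflex
  -- LIP
  have hL : ∀ x z : Q, iv x * (x * z) = z := by
    intro x z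
    have h := h1 x (iv x) z
    rw [hmi, Loop.one_mul] at h
    exact (lcancel h).symm
  have hL' : ∀ x z : Q, x * (iv x * z) = z := by
    intro x z
    have h := hL (iv x) z
    rwa [hii] at h
  -- RIP
  have hR : ∀ x z : Q, (z * x) * iv x = z := by
    intro x z
    obtain ⟨y, hy, -⟩ := Loop.mulLeft_exu x z
    have h := h1 x y (iv x)
    rw [hmi, Loop.mul_one, hy] at h
    exact h
  have haip : ∀ x y : Q, iv (x * y) = iv y * iv x := aip hL hR
  intro x y z
  have hAt : ∀ u v : Q, ((x * u) * x) * (iv x * v) = x * (u * v) := by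
    intro u v
    have h := h1 x u (iv x * v)
    rwa [hL' x v] at h
  have h := rshift hR (fun u => (x * u) * x) (fun v => iv x * v) (fun t => x * t) hAt y z
  rw [haip, hii, hii] at h
  exact h

/-- M4 implies M3 -/
lemma m4_imp_m3 (h4 : ∀ x y z : Q, (x * y) * (z * x) = (x * (y * z)) * x) :
    ∀ x y z : Q, (x * y) * (z * x) = x * ((y * z) * x) := by
  have hflex : ∀ x y : Q, (x * y) * x = x * (y * x) := by
    intro x y
    have h := h4 x 1 y
    simpa [Loop.mul_one, Loop.one_mul] using h.symm
  intro x y z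
  rw [h4, hflex]

/-- M3 implies M1 -/
lemma m3_imp_m1 (h3 : ∀ x y z : Q, (x * y) * (z * x) = x * ((y * z) * x)) :
    ∀ x y z : Q, ((x * y) * x) * z = x * (y * (x * z)) := by
  have hflex : ∀ x y : Q, (x * y) * x = x * (y * x) := by
    intro x y
    have h := h3 x y 1
    simpa [Loop.mul_one, Loop.one_mul] using h
  have hmi : ∀ x : Q, x * iv x = 1 := mul_iv hflex
  have hii : ∀ x : Q, iv (iv x) = x := iv_iv hflex
  -- RIP'
  have hR' : ∀ x z : Q, (z * iv x) * x = z := by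
    intro x z
    have h := h3 x z (iv x)
    rw [iv_mul, Loop.mul_one] at h
    exact (lcancel h).symm
  have hR : ∀ x z : Q, (z * x) * iv x = z := by
    intro x z
    have h := hR' (iv x) z
    rwa [hii] at h
  -- LIP
  have hL : ∀ x z : Q, iv x * (x * z) = z := by
    intro x s
    obtain ⟨z, hz, -⟩ := Loop.mulLeft_exu (iv x) s
    have h := h3 x (iv x) z
    rw [hmi, Loop.one_mul, hz] at h
    rw [← hflex] at h
    have : z = x * s := rcancel h
    rw [← this]
    exact hz
  have haip : ∀ x y : Q, iv (x * y) = iv y * iv x := aip hL hR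
  intro x y z
  have h := rshift hR (fun u => x * u) (fun v => v * x) (fun t => x * (t * x)) (h3 x) y (x * z)
  rw [haip, hii, ← hflex] at h
  -- h : (x*(y*x)) * (iv x * (x*z)) = x * (y * (x*z)), with flex rewritten
  rw [hL x z] at h
  exact h

/-- M3 implies M2 -/
lemma m3_imp_m2 (h3 : ∀ x y z : Q, (x * y) * (z * x) = x * ((y * z) * x)) :
    ∀ x y z : Q, x * (y * (z * y)) = ((x * y) * z) * y := by
  have hflex : ∀ x y : Q, (x * y) * x = x * (y * x) := by
    intro x y
    have h := h3 x y 1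
    simpa [Loop.mul_one, Loop.one_mul] using h
  have hmi : ∀ x : Q, x * iv x = 1 := mul_iv hflex
  have hii : ∀ x : Q, iv (iv x) = x := iv_iv hflex
  have hR' : ∀ x z : Q, (z * iv x) * x = z := by
    intro x z
    have h := h3 x z (iv x)
    rw [iv_mul, Loop.mul_one] at h
    exact (lcancel h).symm
  have hR : ∀ x z : Q, (z * x) * iv x = z := by
    intro x z
    have h := hR' (iv x) z
    rwa [hii] at h
  have hL : ∀ x z : Q, iv x * (x * z) = z := by
    intro x s
    obtain ⟨z, hz, -⟩ := Loop.mulLeft_exu (iv x) s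
    have h := h3 x (iv x) z
    rw [hmi, Loop.one_mul, hz] at h
    rw [← hflex] at h
    have : z = x * s := rcancel h
    rw [← this]
    exact hz
  have haip : ∀ x y : Q, iv (x * y) = iv y * iv x := aip hL hR
  intro x y z
  -- lshift on the autotopism (L_y, R_y, L_y R_y) at point y, with u := x * y
  have h := lshift hL (fun u => y * u) (fun v => v * y) (fun t => y * (t * y)) (h3 y) (x * y) z
  rw [haip, hii, hR] at h
  -- after rw: iv(y * iv(x*y)) = iv(iv(x*y)) * iv y = (x*y) * iv y = x
  exact h

/-- M2 implies M3 -/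
lemma m2_imp_m3 (h2 : ∀ x y z : Q, x * (y * (z * y)) = ((x * y) * z) * y) :
    ∀ x y z : Q, (x * y) * (z * x) = x * ((y * z) * x) := by
  have hflex : ∀ x y : Q, (x * y) * x = x * (y * x) := by
    intro x y
    have h := h2 1 x y
    simpa [Loop.one_mul] using h.symm
  have hmi : ∀ x : Q, x * iv x = 1 := mul_iv hflex
  have hii : ∀ x : Q, iv (iv x) = x := iv_iv hflex
  have hR : ∀ y x : Q, (x * y) * iv y = x := by
    intro y x
    have h := h2 x y (iv y)
    rw [iv_mul, Loop.mul_one] at h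
    exact (rcancel h.symm)
  have hR' : ∀ y x : Q, (x * iv y) * y = x := by
    intro y x
    have h := hR (iv y) x
    rwa [hii] at h
  have hL : ∀ y w : Q, iv y * (y * w) = w := by
    intro y w
    obtain ⟨z, hz, -⟩ := Loop.mulRight_exu y w
    have h := h2 (iv y) y z
    rwa [iv_mul, Loop.one_mul, hz] at h
  have haip : ∀ x y : Q, iv (x * y) = iv y * iv x := aip (fun x z => hL x z) (fun x z => hR x z)
  intro x y z
  -- autotopism from M2: (R_{iv x}, L_x R_x, R_x)
  have hAt : ∀ u v : Q, (u * iv x) * (x * (v * x)) = (u * v) * x := by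
    intro u v
    have h := h2 (u * iv x) x v
    rwa [hR' x u] at h
  have h := lshift hL (fun u => u * iv x) (fun v => x * (v * x)) (fun t => t * x) hAt y z
  rw [haip, hii, hii] at h
  exact h

end LoopAux

/-- In a loop, the four Moufang identities are pairwise equivalent. -/
theorem stmt4 (Q : Type*) [Loop Q] :
    [(∀ x y z : Q, ((x * y) * x) * z = x * (y * (x * z))),
     (∀ x y z : Q, x * (y * (z * y)) = ((x * y) * z) * y),
     (∀ x y z : Q, (x * y) * (z * x) = x * ((y * z) * x)),
     (∀ x y z : Q, (x * y) * (z * x) = (x * (y * z)) * x)].TFAE := by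
  tfae_have 1 → 4 := LoopAux.m1_imp_m4
  tfae_have 4 → 3 := LoopAux.m4_imp_m3
  tfae_have 3 → 1 := LoopAux.m3_imp_m1
  tfae_have 3 → 2 := LoopAux.m3_imp_m2
  tfae_have 2 → 3 := LoopAux.m2_imp_m3
  tfae_finish
end

section
/- Let F be a field. The set M of Zorn vector matrices over F with determinant 1, under Zorn's multiplication, is a Moufang loop: it is closed under the multiplication, has identity [[1,0],[0,1]], every element has a two-sided inverse, and the Moufang identity ((xy)x)z = x(y(xz)) holds for all x, y, z ∈ M. -/
open Matrix

/-- A Zorn vector matrix `[[a, α], [β, b]]` over a field `F`. -/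
structure ZornMatrix (F : Type*) [Field F] where
  a : F
  α : Fin 3 → F
  β : Fin 3 → F
  b : F

namespace ZornMatrix

variable {F : Type*} [Field F]

/-- Zorn's vector matrix multiplication. -/
def mul (M N : ZornMatrix F) : ZornMatrix F :=
  ⟨M.a * N.a + M.α ⬝ᵥ N.β,
   M.a • N.α + N.b • M.α - M.β ⨯₃ N.β,
   N.a • M.β + M.b • N.β + M.α ⨯₃ N.α,
   M.β ⬝ᵥ N.α + M.b * N.b⟩

/-- The determinant of a Zorn vector matrix. -/
def det (M : ZornMatrix F) : F := M.a * M.b - M.α ⬝ᵥ M.β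

/-- The identity Zorn vector matrix. -/
def id : ZornMatrix F := ⟨1, 0, 0, 1⟩

end ZornMatrix


namespace ZornMatrix
variable {F : Type*} [Field F]

lemma ext' {M N : ZornMatrix F} (h1 : M.a = N.a) (h2 : ∀ i, M.α i = N.α i)
    (h3 : ∀ i, M.β i = N.β i) (h4 : M.b = N.b) : M = N := by
  cases M; cases N; simp_all [funext_iff]

lemma mk0 (h) : (⟨0, h⟩ : Fin 3) = 0 := rfl
lemma mk1 (h) : (⟨1, h⟩ : Fin 3) = 1 := rfl
lemma mk2 (h) : (⟨2, h⟩ : Fin 3) = 2 := rfl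

lemma det_mul' (M N : ZornMatrix F) : (mul M N).det = M.det * N.det := by
  simp only [det, mul, dotProduct, crossProduct, Fin.sum_univ_three, Pi.add_apply,
    Pi.sub_apply, Pi.smul_apply, smul_eq_mul, LinearMap.mk₂_apply, cons_val_zero,
    cons_val_one, head_cons, cons_val_two, tail_cons]
  ring

set_option maxHeartbeats 4000000 in
lemma moufang' (x y z : ZornMatrix F) :
    mul (mul (mul x y) x) z = mul x (mul y (mul x z)) := by
  refine ext' ?_ (fun i => ?_) (fun i => ?_) ?_ <;>
    [skip; fin_cases i; fin_cases i; skip] <;>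
  · simp only [mul, dotProduct, crossProduct, Fin.sum_univ_three, Pi.add_apply,
      Pi.sub_apply, Pi.smul_apply, smul_eq_mul, LinearMap.mk₂_apply, cons_val_zero,
      cons_val_one, head_cons, cons_val_two, tail_cons, Fin.isValue, mk0, mk1, mk2]
    ring

lemma id_mul' (M : ZornMatrix F) : mul id M = M := by
  refine ext' ?_ (fun i => ?_) (fun i => ?_) ?_ <;>
    [skip; fin_cases i; fin_cases i; skip] <;>
  · simp only [mul, id, dotProduct, crossProduct, Fin.sum_univ_three, Pi.add_apply,
      Pi.sub_apply, Pi.smul_apply, Pi.zero_apply, smul_eq_mul, LinearMap.mk₂_apply,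
      cons_val_zero, cons_val_one, head_cons, cons_val_two, tail_cons, Fin.isValue,
      mk0, mk1, mk2]
    ring

lemma mul_id' (M : ZornMatrix F) : mul M id = M := by
  refine ext' ?_ (fun i => ?_) (fun i => ?_) ?_ <;>
    [skip; fin_cases i; fin_cases i; skip] <;>
  · simp only [mul, id, dotProduct, crossProduct, Fin.sum_univ_three, Pi.add_apply,
      Pi.sub_apply, Pi.smul_apply, Pi.zero_apply, smul_eq_mul, LinearMap.mk₂_apply,
      cons_val_zero, cons_val_one, head_cons, cons_val_two, tail_cons, Fin.isValue,
      mk0, mk1, mk2]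
    ring

lemma inv_spec (M : ZornMatrix F) (hM : M.det = 1) :
    (⟨M.b, -M.α, -M.β, M.a⟩ : ZornMatrix F).det = 1 ∧
    mul M ⟨M.b, -M.α, -M.β, M.a⟩ = id ∧ mul ⟨M.b, -M.α, -M.β, M.a⟩ M = id := by
  have h := hM
  simp only [det, dotProduct, Fin.sum_univ_three, Fin.isValue] at h
  refine ⟨?_, ?_, ?_⟩
  · simp only [det, dotProduct, Fin.sum_univ_three, Pi.neg_apply]
    linear_combination h
  all_goals
    refine ext' ?_ (fun i => ?_) (fun i => ?_) ?_ <;>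
      [skip; fin_cases i; fin_cases i; skip] <;>
    · simp only [mul, id, dotProduct, crossProduct, Fin.sum_univ_three, Pi.add_apply,
        Pi.sub_apply, Pi.neg_apply, Pi.smul_apply, Pi.zero_apply, smul_eq_mul,
        LinearMap.mk₂_apply, cons_val_zero, cons_val_one, head_cons, cons_val_two,
        tail_cons, Fin.isValue, mk0, mk1, mk2]
      first | ring1 | linear_combination h

end ZornMatrix

/-- The determinant-one Zorn vector matrices form a Moufang loop under Zorn's
multiplication: closure, identity, two-sided inverses, and the Moufang identity. -/
theorem stmt6 {F : Type*} [Field F] :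
    (∀ M N : ZornMatrix F, M.det = 1 → N.det = 1 → (ZornMatrix.mul M N).det = 1) ∧
    (ZornMatrix.id : ZornMatrix F).det = 1 ∧
    (∀ M : ZornMatrix F, ZornMatrix.mul ZornMatrix.id M = M ∧
      ZornMatrix.mul M ZornMatrix.id = M) ∧
    (∀ M : ZornMatrix F, M.det = 1 → ∃ N : ZornMatrix F, N.det = 1 ∧
      ZornMatrix.mul M N = ZornMatrix.id ∧ ZornMatrix.mul N M = ZornMatrix.id) ∧
    (∀ x y z : ZornMatrix F, x.det = 1 → y.det = 1 → z.det = 1 →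
      ZornMatrix.mul (ZornMatrix.mul (ZornMatrix.mul x y) x) z =
        ZornMatrix.mul x (ZornMatrix.mul y (ZornMatrix.mul x z))) := by
  refine ⟨fun M N hM hN => by rw [ZornMatrix.det_mul', hM, hN, one_mul], ?_,
    fun M => ⟨ZornMatrix.id_mul' M, ZornMatrix.mul_id' M⟩,
    fun M hM => ⟨⟨M.b, -M.α, -M.β, M.a⟩, ZornMatrix.inv_spec M hM⟩,
    fun x y z _ _ _ => ZornMatrix.moufang' x y z⟩
  simp [ZornMatrix.det, ZornMatrix.id]
end

section
/- Let F be a field. The multiplication of Zorn vector matrices over F is not associative when F has more than one element; in particular the loop M of determinant-1 Zorn matrices over the field with q elements (q ≥ 2) is a non-associative Moufang loop. -/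
open Matrix

/-- Zorn's multiplication is not associative: over any field there exist
determinant-one Zorn vector matrices `x, y, z` with `(xy)z ≠ x(yz)`; in particular the
loop of determinant-one Zorn matrices over a finite field is a non-associative loop. -/
theorem stmt7 {F : Type*} [Field F] :
    ∃ x y z : ZornMatrix F, x.det = 1 ∧ y.det = 1 ∧ z.det = 1 ∧
      ZornMatrix.mul (ZornMatrix.mul x y) z ≠ ZornMatrix.mul x (ZornMatrix.mul y z) := by
  refine ⟨⟨1, ![1,0,0], 0, 1⟩, ⟨1, ![0,1,0], 0, 1⟩, ⟨1, ![0,0,1], 0, 1⟩, ?_, ?_, ?_, ?_⟩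
  · simp [ZornMatrix.det, dotProduct, Fin.sum_univ_three]
  · simp [ZornMatrix.det, dotProduct, Fin.sum_univ_three]
  · simp [ZornMatrix.det, dotProduct, Fin.sum_univ_three]
  · intro h
    have h2 := congrArg ZornMatrix.a h
    simp [ZornMatrix.mul, dotProduct, crossProduct, Fin.sum_univ_three] at h2
end

section
/- Let F_q be a finite field and let L be the loop of Zorn vector matrices over F_q with nonzero determinant. The center of L is Z(L) = { [[a,0],[0,a]] : a ∈ F_q, a ≠ 0 }, which is isomorphic to the multiplicative group of F_q. -/
open Matrix

namespace ZornMatrix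
variable {F : Type*} [Field F]

def smulZ (a : F) (M : ZornMatrix F) : ZornMatrix F := ⟨a * M.a, a • M.α, a • M.β, a * M.b⟩

lemma mul_scalar_left (a : F) (x : ZornMatrix F) :
    mul ⟨a, 0, 0, a⟩ x = smulZ a x := by
  simp [mul, smulZ, smul_smul, mul_comm]

lemma mul_scalar_right (a : F) (x : ZornMatrix F) :
    mul x ⟨a, 0, 0, a⟩ = smulZ a x := by
  simp [mul, smulZ, smul_smul, mul_comm]

lemma mul_smulZ_left (a : F) (M N : ZornMatrix F) :
    mul (smulZ a M) N = smulZ a (mul M N) := by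
  simp only [mul, smulZ, smul_dotProduct, LinearMap.map_smul, LinearMap.smul_apply,
    smul_add, smul_sub, smul_smul, smul_comm a]
  simp only [ZornMatrix.mk.injEq]
  exact ⟨by rw [smul_eq_mul]; ring, by module, by module, by rw [smul_eq_mul]; ring⟩

lemma mul_smulZ_right (a : F) (M N : ZornMatrix F) :
    mul M (smulZ a N) = smulZ a (mul M N) := by
  simp only [mul, smulZ, dotProduct_smul, LinearMap.map_smul, LinearMap.smul_apply,
    smul_add, smul_sub, smul_smul, smul_comm a]
  simp only [ZornMatrix.mk.injEq]
  exact ⟨by rw [smul_eq_mul]; ring, by module, by module, by rw [smul_eq_mul]; ring⟩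

end ZornMatrix

open ZornMatrix in
/-- The center of the loop `L` of Zorn vector matrices with nonzero determinant over a
finite field consists exactly of the nonzero scalar matrices, and is isomorphic to the
multiplicative group of the field. -/
theorem stmt8 {F : Type*} [Field F] [Fintype F] :
    ({z : ZornMatrix F | z.det ≠ 0 ∧
        (∀ x : ZornMatrix F, x.det ≠ 0 → mul z x = mul x z) ∧
        (∀ x y : ZornMatrix F, x.det ≠ 0 → y.det ≠ 0 →
          mul z (mul x y) = mul (mul z x) y ∧
          mul x (mul z y) = mul (mul x z) y ∧
          mul (mul x y) z = mul x (mul y z))} =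
      {z : ZornMatrix F | ∃ a : F, a ≠ 0 ∧ z = ⟨a, 0, 0, a⟩}) ∧
    ∃ e : Fˣ ≃ {z : ZornMatrix F | ∃ a : F, a ≠ 0 ∧ z = ⟨a, 0, 0, a⟩},
      ∀ a b : Fˣ, (e (a * b) : ZornMatrix F) = mul (e a : ZornMatrix F) (e b : ZornMatrix F) := by
  constructor
  · ext z
    simp only [Set.mem_setOf_eq]
    constructor
    · rintro ⟨hdet, hcomm, -⟩
      -- test matrices
      have hβ : z.β = 0 := by
        funext i
        have h := hcomm ⟨1, Pi.single i 1, 0, 1⟩ (by simp [ZornMatrix.det, dotProduct])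
        have hb := congrArg ZornMatrix.b h
        simpa [mul] using hb
      have hα : z.α = 0 := by
        funext i
        have h := hcomm ⟨0, Pi.single i 1, Pi.single i 1, 0⟩
          (by simp [ZornMatrix.det, dotProduct, Pi.single_apply, Finset.sum_ite_eq'])
        have ha := congrArg ZornMatrix.a h
        simp [mul, hβ] at ha
        simpa using ha
      have hab : z.a = z.b := by
        have h := hcomm ⟨1, Pi.single 0 1, 0, 1⟩ (by simp [ZornMatrix.det, dotProduct])
        have ha := congrArg ZornMatrix.α h
        simp [mul, hβ, hα] at ha
        exact ha
      refine ⟨z.a, ?_, ?_⟩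
      · intro h0
        apply hdet
        simp [ZornMatrix.det, hα, h0]
      · cases z with
        | mk a α β b => simp_all
    · rintro ⟨a, ha, rfl⟩
      refine ⟨by simpa [ZornMatrix.det, dotProduct] using mul_ne_zero ha ha, fun x _ => ?_, fun x y _ _ => ?_⟩
      · rw [mul_scalar_left, mul_scalar_right]
      · refine ⟨?_, ?_, ?_⟩
        · rw [mul_scalar_left, mul_scalar_left, mul_smulZ_left]
        · rw [mul_scalar_left, mul_scalar_right, mul_smulZ_right, mul_smulZ_left]
        · rw [mul_scalar_right, mul_scalar_right, mul_smulZ_right]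
  · refine ⟨⟨fun a => ⟨⟨a, 0, 0, a⟩, a, a.ne_zero, rfl⟩,
      fun z => Units.mk0 z.1.a (by obtain ⟨a, ha, hz⟩ := z.2; rw [hz]; exact ha),
      fun a => by simp,
      fun z => by
        obtain ⟨a, ha, hz⟩ := z.2
        apply Subtype.ext
        simp [hz]⟩, fun a b => ?_⟩
    simp only [Equiv.coe_fn_mk]
    rw [mul_scalar_left]
    simp [smulZ, Units.val_mul]
end
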